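/- Let x_1, …, x_n be pairwise distinct complex numbers satisfying |x_i − x_j| ≥ ζ > 0 for i ≠ j, let ℓ_1, …, ℓ_n be positive integers with N = ℓ_1 + ⋯ + ℓ_n, and for fixed j define h_j(x) = Π_{i≠j} (x − x_i)^{−ℓ_i}. Then for every natural number k, |h_j^{(k)}(x_j)| ≤ N(N+1)⋯(N+k−1) · ζ^{−N−k+ℓ_j}. -/

import Mathlib

open Finset

private lemma iteratedDeriv_eq_within {U : Set ℂ} (hU : IsOpen U) {x : ℂ} (hx : x ∈ U)
    (f : ℂ → ℂ) (k : ℕ) : iteratedDeriv k f x = iteratedDerivWithin k f U x := by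
  rw [iteratedDeriv_eq_iteratedFDeriv, iteratedDerivWithin_eq_iteratedFDerivWithin,
    iteratedFDerivWithin_of_isOpen k hU hx]

private lemma iteratedDerivWithin_fun_sum' {s : Set ℂ} (hs : UniqueDiffOn ℂ s) {x : ℂ}
    (hx : x ∈ s) {ι : Type*} (t : Finset ι) (f : ι → ℂ → ℂ) {k : ℕ}
    (hf : ∀ i ∈ t, ContDiffOn ℂ k (f i) s) :
    iteratedDerivWithin k (fun w => ∑ i ∈ t, f i w) s x
      = ∑ i ∈ t, iteratedDerivWithin k (f i) s x := by
  simp_rw [iteratedDerivWithin_eq_iteratedFDerivWithin]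
  rw [show (fun w => ∑ i ∈ t, f i w) = (∑ i ∈ t, f i ·) from rfl,
    iteratedFDerivWithin_fun_sum_apply hs hx (fun i hi => hf i hi x hx)]
  simp

private lemma prony_key (n : ℕ) (x : Fin n → ℂ) (ζ : ℝ) (hζ : 0 < ζ) (j : Fin n)
    (hsep : ∀ i ∈ Finset.univ.erase j, ζ ≤ ‖x j - x i‖) :
    ∀ (k : ℕ) (m : Fin n → ℕ), (∀ i, 1 ≤ m i) →
      ‖iteratedDeriv k
          (fun w => ∏ i ∈ Finset.univ.erase j, ((w - x i) ^ m i)⁻¹) (x j)‖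
        ≤ (∏ r ∈ Finset.range k, ((∑ i ∈ Finset.univ.erase j, m i : ℝ) + r)) *
          (ζ ^ (∑ i ∈ Finset.univ.erase j, m i + k))⁻¹ := by
  set T := Finset.univ.erase j with hT
  -- points are distinct from x j
  have hne : ∀ i ∈ T, x j ≠ x i := by
    intro i hi
    have := lt_of_lt_of_le hζ (hsep i hi)
    intro hEq
    rw [hEq, sub_self] at this
    simp at this
  -- the open set
  set U : Set ℂ := (↑(T.image x) : Set ℂ)ᶜ with hUdef
  have hU : IsOpen U := (Set.Finite.isClosed (T.image x).finite_toSet).isOpen_compl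
  have hmemU : ∀ w : ℂ, w ∈ U ↔ ∀ i ∈ T, w ≠ x i := by
    intro w
    simp [hUdef, Finset.mem_image]
    tauto
  have hxjU : x j ∈ U := (hmemU _).mpr hne
  -- smoothness of all the products on U
  have hCD : ∀ (m : Fin n → ℕ) (k : ℕ),
      ContDiffOn ℂ k (fun w => ∏ i ∈ T, ((w - x i) ^ m i)⁻¹) U := by
    intro m k
    apply DifferentiableOn.contDiffOn _ hU
    apply DifferentiableOn.fun_finsetProd
    intro i hi
    apply DifferentiableOn.inv
    · exact ((differentiable_id.sub_const _).pow _).differentiableOn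
    · intro w hw
      exact pow_ne_zero _ (sub_ne_zero.mpr ((hmemU w).mp hw i hi))
  intro k
  induction k with
  | zero =>
    intro m hm
    rw [iteratedDeriv_zero]
    simp only [Finset.prod_range_zero, one_mul, Nat.add_zero]
    rw [norm_prod]
    rw [← Finset.prod_pow_eq_pow_sum, ← Finset.prod_inv_distrib]
    apply Finset.prod_le_prod
    · intro i _; positivity
    · intro i hi
      rw [norm_inv, norm_pow]
      exact inv_anti₀ (pow_pos hζ _)
        (pow_le_pow_left₀ hζ.le (hsep i hi) _)
  | succ k IH =>
    intro m hm
    set S : ℕ := ∑ i ∈ T, m i with hS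
    have hScast : ∑ i ∈ T, (m i : ℝ) = (S : ℝ) := by rw [hS]; push_cast; ring
    simp only [hScast]
    -- derivative formula on U
    set g : ℂ → ℂ := fun w => ∑ i ∈ T,
      (-(m i : ℂ)) * ∏ l ∈ T, ((w - x l) ^ (Function.update m i (m i + 1)) l)⁻¹ with hg
    have hderiv : ∀ w ∈ U, deriv (fun w => ∏ i ∈ T, ((w - x i) ^ m i)⁻¹) w = g w := by
      intro w hw
      have hfac : ∀ i ∈ T, HasDerivAt (fun w : ℂ => ((w - x i) ^ m i)⁻¹)
          (-(m i : ℂ) * ((w - x i) ^ (m i + 1))⁻¹) w := by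
        intro i hi
        have hwne : w - x i ≠ 0 := sub_ne_zero.mpr ((hmemU w).mp hw i hi)
        have h1 := hasDerivAt_zpow (-(m i : ℤ)) (w - x i) (Or.inl hwne)
        have h2 : HasDerivAt (fun w : ℂ => w - x i) 1 w := (hasDerivAt_id w).sub_const _
        have h3 := h1.comp w h2
        have hfun : (fun w : ℂ => ((w - x i) ^ m i)⁻¹)
            = (fun y : ℂ => y ^ (-(m i : ℤ))) ∘ (fun w : ℂ => w - x i) := by
          funext y; simp [Function.comp, zpow_neg]
        have hval : ((-(m i : ℤ) : ℤ) : ℂ) * (w - x i) ^ (-(m i : ℤ) - 1) * 1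
            = -(m i : ℂ) * ((w - x i) ^ (m i + 1))⁻¹ := by
          have : (-(m i : ℤ) - 1) = -((m i + 1 : ℕ) : ℤ) := by push_cast; ring
          rw [this, zpow_neg, zpow_natCast]
          push_cast
          ring
        rw [hfun]
        rw [← hval]
        exact h3
      have hprod := HasDerivAt.fun_finsetProd hfac
      have := hprod.deriv
      rw [show (∏ i ∈ T, (fun w : ℂ => ((w - x i) ^ m i)⁻¹) ·)
          = (fun w => ∏ i ∈ T, ((w - x i) ^ m i)⁻¹) from rfl] at this
      rw [this, hg]
      apply Finset.sum_congr rfl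
      intro i hi
      have herase : ∏ l ∈ T, ((w - x l) ^ (Function.update m i (m i + 1)) l)⁻¹
          = ((w - x i) ^ (m i + 1))⁻¹ * ∏ l ∈ T.erase i, ((w - x l) ^ m l)⁻¹ := by
        rw [← Finset.mul_prod_erase T _ hi]
        congr 1
        · rw [Function.update_self]
        · apply Finset.prod_congr rfl
          intro l hl
          rw [Function.update_of_ne (Finset.ne_of_mem_erase hl)]
      rw [herase]
      rw [smul_eq_mul]
      ring
    -- rewrite the iterated derivative
    have hEq : deriv (fun w => ∏ i ∈ T, ((w - x i) ^ m i)⁻¹) =ᶠ[nhds (x j)] g :=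
      Filter.eventuallyEq_of_mem (hU.mem_nhds hxjU) hderiv
    rw [iteratedDeriv_succ', hEq.iteratedDeriv_eq k]
    rw [iteratedDeriv_eq_within hU hxjU]
    have hCDg : ∀ i ∈ T, ContDiffOn ℂ k
        (fun w => (-(m i : ℂ)) * ∏ l ∈ T, ((w - x l) ^ (Function.update m i (m i + 1)) l)⁻¹)
        U := fun i _ => (hCD _ k).const_smul (-(m i : ℂ))
    rw [hg, iteratedDerivWithin_fun_sum' hU.uniqueDiffOn hxjU T _ hCDg]
    -- bound the sum
    have hterm : ∀ i ∈ T,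
        ‖iteratedDerivWithin k
          (fun w => (-(m i : ℂ)) * ∏ l ∈ T, ((w - x l) ^ (Function.update m i (m i + 1)) l)⁻¹)
          U (x j)‖
        ≤ (m i : ℝ) * ((∏ r ∈ Finset.range k, ((S : ℝ) + 1 + r)) * (ζ ^ (S + 1 + k))⁻¹) := by
      intro i hi
      rw [iteratedDerivWithin_const_mul hxjU hU.uniqueDiffOn _ ((hCD _ k) _ hxjU)]
      rw [norm_mul]
      simp only [norm_neg, Complex.norm_natCast]
      apply mul_le_mul_of_nonneg_left _ (by positivity)
      rw [← iteratedDeriv_eq_within hU hxjU]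
      have hm' : ∀ l, 1 ≤ Function.update m i (m i + 1) l := by
        intro l
        rcases eq_or_ne l i with rfl | hne'
        · rw [Function.update_self]; omega
        · rw [Function.update_of_ne hne']; exact hm l
      have hsum' : ∑ l ∈ T, Function.update m i (m i + 1) l = S + 1 := by
        rw [← Finset.add_sum_erase _ _ hi, Function.update_self, hS,
          ← Finset.add_sum_erase _ _ hi]
        have : ∑ l ∈ T.erase i, Function.update m i (m i + 1) l
            = ∑ l ∈ T.erase i, m l :=
          Finset.sum_congr rfl fun l hl =>
            Function.update_of_ne (Finset.ne_of_mem_erase hl) _ _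
        omega
      have hsum'' : ∑ l ∈ T, ((Function.update m i (m i + 1) l : ℝ)) = (S : ℝ) + 1 := by
        rw [← Nat.cast_sum, hsum']; push_cast; ring
      have := IH (Function.update m i (m i + 1)) hm'
      rw [hsum', hsum''] at this
      convert this using 3 <;> push_cast <;> ring
    calc ‖∑ i ∈ T, iteratedDerivWithin k
          (fun w => (-(m i : ℂ)) * ∏ l ∈ T, ((w - x l) ^ (Function.update m i (m i + 1)) l)⁻¹)
          U (x j)‖
        ≤ ∑ i ∈ T, ‖iteratedDerivWithin k
          (fun w => (-(m i : ℂ)) * ∏ l ∈ T, ((w - x l) ^ (Function.update m i (m i + 1)) l)⁻¹)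
          U (x j)‖ := by
          exact norm_sum_le _ _
      _ ≤ ∑ i ∈ T, (m i : ℝ) * ((∏ r ∈ Finset.range k, ((S : ℝ) + 1 + r)) * (ζ ^ (S + 1 + k))⁻¹) :=
          Finset.sum_le_sum hterm
      _ = (S : ℝ) * ((∏ r ∈ Finset.range k, ((S : ℝ) + 1 + r)) * (ζ ^ (S + 1 + k))⁻¹) := by
          rw [← Finset.sum_mul, hS]
          push_cast
          ring
      _ = (∏ r ∈ Finset.range (k + 1), ((S : ℝ) + r)) * (ζ ^ (S + (k + 1)))⁻¹ := by
          rw [Finset.prod_range_succ']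
          have harg : ∀ r : ℕ, ((S : ℝ) + ((r : ℕ) + 1 : ℕ)) = (S : ℝ) + 1 + r := by
            intro r; push_cast; ring
          simp only [harg]
          have : S + 1 + k = S + (k + 1) := by omega
          rw [this]
          push_cast
          ring

theorem prony_h_derivative_bound (n : ℕ) (x : Fin n → ℂ) (ℓ : Fin n → ℕ)
    (hℓ : ∀ i, 1 ≤ ℓ i) (ζ : ℝ) (hζ : 0 < ζ)
    (hsep : ∀ i j, i ≠ j → ζ ≤ ‖x i - x j‖)
    (N : ℕ) (hN : N = ∑ i, ℓ i) (j : Fin n)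
    (h : ℂ → ℂ) (hh : h = fun w => ∏ i ∈ Finset.univ.erase j, ((w - x i) ^ ℓ i)⁻¹)
    (k : ℕ) :
    ‖iteratedDeriv k h (x j)‖ ≤
      (∏ r ∈ Finset.range k, ((N : ℝ) + r)) * ζ ^ (-(N : ℤ) - k + ℓ j) := by
  have hsep' : ∀ i ∈ Finset.univ.erase j, ζ ≤ ‖x j - x i‖ := by
    intro i hi
    exact hsep j i (Ne.symm (Finset.mem_erase.mp hi).1)
  have key := prony_key n x ζ hζ j hsep' k ℓ hℓ
  rw [← hh] at key
  set S : ℕ := ∑ i ∈ Finset.univ.erase j, ℓ i with hS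
  have hNS : N = ℓ j + S := by
    rw [hN, hS, ← Finset.add_sum_erase _ _ (Finset.mem_univ j)]
  have hexp : ζ ^ (-(N : ℤ) - k + ℓ j) = (ζ ^ (S + k))⁻¹ := by
    have : (-(N : ℤ) - k + ℓ j) = -((S + k : ℕ) : ℤ) := by
      rw [hNS]; push_cast; ring
    rw [this, zpow_neg, zpow_natCast]
  rw [hexp]
  refine le_trans key (mul_le_mul_of_nonneg_right ?_ (by positivity))
  have hScast : ∑ i ∈ Finset.univ.erase j, (ℓ i : ℝ) = (S : ℝ) := by
    rw [hS]; push_cast; ring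
  rw [hScast] at key ⊢ <;> try skip
  apply Finset.prod_le_prod
  · intro r _; positivity
  · intro r _
    have : (S : ℝ) ≤ N := by
      rw [hNS]; push_cast; linarith [Nat.cast_nonneg (α := ℝ) (ℓ j)]
    linarith
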